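/- Let s ≥ 0 and d ≥ 1. The specialized space X^s(ℝ^d), equipped with the inner product ⟨f,g⟩ = ∫ ω_s(ξ) f̂(ξ) conj(ĝ(ξ)) dξ, is a Hilbert space (in particular, it is complete). -/

import Mathlib

open MeasureTheory
open scoped ENNReal NNReal ComplexConjugate

/-- The anisotropic weight `ω_s` defining the specialized space `X^s(ℝ^d)`. -/
noncomputable def omegaD (d : ℕ) (hd : 0 < d) (s : ℝ) (ξ : EuclideanSpace ℝ (Fin d)) : ℝ :=
  if ‖ξ‖ < 1 then ((ξ ⟨0, hd⟩) ^ 2 + ‖ξ‖ ^ 4) / ‖ξ‖ ^ 2 else (1 + ‖ξ‖ ^ 2) ^ s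

/-- The squared `X^s` norm of (the distribution whose Fourier transform is) `G`. -/
noncomputable def XnormSq (d : ℕ) (hd : 0 < d) (s : ℝ)
    (G : EuclideanSpace ℝ (Fin d) → ℂ) : ℝ≥0∞ :=
  ∫⁻ ξ, ENNReal.ofReal (omegaD d hd s ξ) * (‖G ξ‖₊ : ℝ≥0∞) ^ 2


lemma omegaD_nonneg (d : ℕ) (hd : 0 < d) (s : ℝ) (ξ : EuclideanSpace ℝ (Fin d)) :
    0 ≤ omegaD d hd s ξ := by
  unfold omegaD
  split_ifs
  · positivity
  · positivity

lemma omegaD_pos (d : ℕ) (hd : 0 < d) (s : ℝ) (ξ : EuclideanSpace ℝ (Fin d)) (hξ : ξ ≠ 0) :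
    0 < omegaD d hd s ξ := by
  unfold omegaD
  have hn : 0 < ‖ξ‖ := norm_pos_iff.mpr hξ
  split_ifs
  · positivity
  · positivity

lemma omegaD_neg (d : ℕ) (hd : 0 < d) (s : ℝ) (ξ : EuclideanSpace ℝ (Fin d)) :
    omegaD d hd s (-ξ) = omegaD d hd s ξ := by
  unfold omegaD
  have h1 : ‖(-ξ : EuclideanSpace ℝ (Fin d))‖ = ‖ξ‖ := norm_neg ξ
  have h2 : (-ξ : EuclideanSpace ℝ (Fin d)) ⟨0, hd⟩ = -(ξ ⟨0, hd⟩) := rfl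
  rw [h1, h2]
  ring_nf

lemma measurable_omegaD (d : ℕ) (hd : 0 < d) (s : ℝ) :
    Measurable fun ξ => ENNReal.ofReal (omegaD d hd s ξ) := by
  apply Measurable.ennreal_ofReal
  unfold omegaD
  have hnorm : Measurable fun ξ : EuclideanSpace ℝ (Fin d) => ‖ξ‖ := measurable_norm
  have happ : Measurable fun ξ : EuclideanSpace ℝ (Fin d) => ξ ⟨0, hd⟩ := by
    exact (EuclideanSpace.proj (⟨0, hd⟩ : Fin d) : EuclideanSpace ℝ (Fin d) →L[ℝ] ℝ).measurable
  apply Measurable.ite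
  · exact measurableSet_lt hnorm measurable_const
  · exact ((happ.pow_const 2).add (hnorm.pow_const 4)).div (hnorm.pow_const 2)
  · have : Continuous fun ξ : EuclideanSpace ℝ (Fin d) => (1 + ‖ξ‖ ^ 2) ^ s :=
      Continuous.rpow_const (by continuity) (fun x => Or.inl (by positivity))
    exact this.measurable

-- weighted AM-GM
lemma amgm' (x y θ : ℝ) (hx : 0 < x) (hy : 0 < y) (hθ0 : 0 ≤ θ) (hθ1 : θ ≤ 1) :
    x ^ θ * y ^ (1 - θ) ≤ x + y := by
  have hm : 0 < max x y := lt_max_of_lt_left hx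
  calc x ^ θ * y ^ (1 - θ)
      ≤ (max x y) ^ θ * (max x y) ^ (1 - θ) := by
        apply mul_le_mul
        · exact Real.rpow_le_rpow hx.le (le_max_left _ _) hθ0
        · exact Real.rpow_le_rpow hy.le (le_max_right _ _) (by linarith)
        · positivity
        · positivity
    _ = max x y := by
        rw [← Real.rpow_add hm]
        norm_num
    _ ≤ x + y := max_le (by linarith) (by linarith)

-- the core inequality: u = ξ₀², v = ‖ξ‖² - ξ₀², t = ξ₁²
lemma core_ineq (u v t : ℝ) (hu : 0 < u) (ht : 0 < t) (htv : t ≤ v) :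
    (u + v) / (u + (u + v) ^ 2) ≤ 1 + u ^ (-(3/8) : ℝ) * t ^ (-(1/4) : ℝ) := by
  have hv : 0 < v := lt_of_lt_of_le ht htv
  have h1 : (u + v) / (u + (u + v) ^ 2) ≤ (u + v) / (u + v ^ 2) := by
    apply div_le_div_of_nonneg_left (by positivity) (by positivity)
    have : v ^ 2 ≤ (u + v) ^ 2 := by nlinarith
    linarith
  have h2 : (u + v) / (u + v ^ 2) ≤ 1 + v / (u + v ^ 2) := by
    rw [add_div]
    have : u / (u + v ^ 2) ≤ 1 := by
      rw [div_le_one (by positivity)]; nlinarith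
    linarith
  have h3 : v / (u + v ^ 2) ≤ u ^ (-(3/8) : ℝ) * v ^ (-(1/4) : ℝ) := by
    have hden : u ^ ((3:ℝ)/8) * v ^ ((5:ℝ)/4) ≤ u + v ^ 2 := by
      have := amgm' u (v ^ 2) (3/8) hu (by positivity) (by norm_num) (by norm_num)
      calc u ^ ((3:ℝ)/8) * v ^ ((5:ℝ)/4)
          = u ^ ((3:ℝ)/8) * (v ^ 2) ^ (1 - (3:ℝ)/8) := by
            congr 1
            rw [← Real.rpow_natCast v 2, ← Real.rpow_mul hv.le]
            norm_num
        _ ≤ u + v ^ 2 := this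
    have hdpos : 0 < u ^ ((3:ℝ)/8) * v ^ ((5:ℝ)/4) := by positivity
    calc v / (u + v ^ 2) ≤ v / (u ^ ((3:ℝ)/8) * v ^ ((5:ℝ)/4)) :=
          div_le_div_of_nonneg_left hv.le hdpos hden
      _ = u ^ (-(3/8) : ℝ) * v ^ (-(1/4) : ℝ) := by
          rw [eq_comm, eq_div_iff (ne_of_gt hdpos)]
          calc u ^ (-(3/8) : ℝ) * v ^ (-(1/4) : ℝ) * (u ^ ((3:ℝ)/8) * v ^ ((5:ℝ)/4))
              = (u ^ (-(3/8) : ℝ) * u ^ ((3:ℝ)/8)) * (v ^ (-(1/4) : ℝ) * v ^ ((5:ℝ)/4)) := by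
                ring
            _ = v := by
                rw [← Real.rpow_add hu, ← Real.rpow_add hv]
                norm_num
  have h4 : v ^ (-(1/4) : ℝ) ≤ t ^ (-(1/4) : ℝ) := by
    rw [Real.rpow_neg hv.le, Real.rpow_neg ht.le]
    apply inv_anti₀ (by positivity)
    exact Real.rpow_le_rpow ht.le htv (by norm_num)
  have h5 : u ^ (-(3/8) : ℝ) * v ^ (-(1/4) : ℝ) ≤ u ^ (-(3/8) : ℝ) * t ^ (-(1/4) : ℝ) := by
    apply mul_le_mul_of_nonneg_left h4 (by positivity)
  linarith

lemma norm_sq_eq (d : ℕ) (ξ : EuclideanSpace ℝ (Fin d)) : ‖ξ‖ ^ 2 = ∑ i, (ξ i) ^ 2 := by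
  rw [EuclideanSpace.norm_eq]
  rw [Real.sq_sqrt (by positivity)]
  congr 1
  funext i
  rw [Real.norm_eq_abs, sq_abs]

-- pointwise bound, d ≥ 2 case
lemma omega_inv_bound (d : ℕ) (hd : 0 < d) (h2 : 1 < d) (s : ℝ)
    (ξ : EuclideanSpace ℝ (Fin d)) (hξ : ‖ξ‖ < 1)
    (h0 : ξ ⟨0, hd⟩ ≠ 0) (h1 : ξ ⟨1, h2⟩ ≠ 0) :
    (ENNReal.ofReal (omegaD d hd s ξ))⁻¹
      ≤ ENNReal.ofReal (1 + (ξ ⟨0, hd⟩ ^ 2) ^ (-(3/8) : ℝ) * (ξ ⟨1, h2⟩ ^ 2) ^ (-(1/4) : ℝ)) := by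
  set u := ξ ⟨0, hd⟩ ^ 2 with hu'
  set t := ξ ⟨1, h2⟩ ^ 2 with ht'
  have hu : 0 < u := by positivity
  have ht : 0 < t := by positivity
  set v := ‖ξ‖ ^ 2 - u with hv'
  have hsum : ‖ξ‖ ^ 2 = ∑ i, (ξ i) ^ 2 := norm_sq_eq d ξ
  have hne : (⟨0, hd⟩ : Fin d) ≠ ⟨1, h2⟩ := by
    intro h
    exact absurd (congrArg Fin.val h) (by norm_num)
  have htv : t ≤ v := by
    have hpair : u + t ≤ ∑ i, (ξ i) ^ 2 := by
      rw [hu', ht', ← Finset.sum_pair (f := fun i => ξ i ^ 2) hne]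
      apply Finset.sum_le_sum_of_subset_of_nonneg
      · intro x _; exact Finset.mem_univ x
      · intro i _ _; positivity
    simp only [hv']
    rw [hsum]
    linarith
  have homega : omegaD d hd s ξ = (u + (u + v) ^ 2) / (u + v) := by
    unfold omegaD
    rw [if_pos hξ]
    have h4 : ‖ξ‖ ^ 4 = (‖ξ‖ ^ 2) ^ 2 := by ring
    rw [h4]
    congr 2 <;> simp [hv']
  have hωpos : 0 < omegaD d hd s ξ := by
    rw [homega]
    have : 0 < u + v := by nlinarith
    positivity
  have hpos : (0:ℝ) < (u + (u + v) ^ 2) / (u + v) := by rw [← homega]; exact hωpos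
  rw [homega, ← ENNReal.ofReal_inv_of_pos hpos]
  apply ENNReal.ofReal_le_ofReal
  rw [inv_div]
  exact core_ineq u v t hu ht htv

-- d = 1 case: omega ≥ 1 inside the ball (away from 0)
lemma omega_ge_one_d1 (d : ℕ) (hd : 0 < d) (h2 : ¬ 1 < d) (s : ℝ)
    (ξ : EuclideanSpace ℝ (Fin d)) (hξ : ‖ξ‖ < 1) (h0 : ξ ≠ 0) :
    1 ≤ omegaD d hd s ξ := by
  have hd1 : d = 1 := by omega
  subst hd1
  have hnorm : ‖ξ‖ ^ 2 = (ξ ⟨0, hd⟩) ^ 2 := by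
    rw [norm_sq_eq]
    rw [show (Finset.univ : Finset (Fin 1)) = {⟨0, hd⟩} from rfl]
    simp
  have hnp : 0 < ‖ξ‖ := norm_pos_iff.mpr h0
  unfold omegaD
  rw [if_pos hξ]
  rw [show ‖ξ‖ ^ 4 = (‖ξ‖ ^ 2) ^ 2 by ring, ← hnorm]
  rw [one_le_div (by positivity)]
  nlinarith [sq_nonneg (‖ξ‖ ^ 2)]

lemma integrable_g1d (c : ℝ) (hc : -1 < c) :
    Integrable (fun t : ℝ => if |t| ≤ 1 then |t| ^ c else 0) volume := by
  have hIoo : IntegrableOn (fun t : ℝ => |t| ^ c) (Set.Ioo 0 1) volume := by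
    have h := (intervalIntegral.integrableOn_Ioo_rpow_iff (s := c) one_pos).mpr hc
    apply h.congr_fun ?_ measurableSet_Ioo
    intro x hx
    show x ^ c = |x| ^ c
    rw [abs_of_pos hx.1]
  have hneg : IntegrableOn (fun t : ℝ => |t| ^ c) (Set.Ioo (-1) 0) volume := by
    rw [← (Measure.measurePreserving_neg (volume : Measure ℝ)).integrableOn_comp_preimage
        (Homeomorph.neg ℝ).measurableEmbedding]
    have hset : (Neg.neg ⁻¹' Set.Ioo (-1 : ℝ) 0) = Set.Ioo 0 1 := by
      ext x
      simp only [Set.mem_preimage, Set.mem_Ioo]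
      constructor
      · rintro ⟨h1, h2⟩; constructor <;> linarith
      · rintro ⟨h1, h2⟩; constructor <;> linarith
    have hfun : ((fun t : ℝ => |t| ^ c) ∘ Neg.neg) = fun t : ℝ => |t| ^ c := by
      funext t; simp [Function.comp, abs_neg]
    rw [hset, hfun]
    exact hIoo
  have hIcc : IntegrableOn (fun t : ℝ => |t| ^ c) (Set.Icc (-1) 1) volume := by
    have hsub : Set.Icc (-1:ℝ) 1 ⊆ (Set.Ioo (-1:ℝ) 0 ∪ Set.Ioo 0 1) ∪ ({-1, 0, 1} : Set ℝ) := by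
      intro x hx
      rcases lt_trichotomy x 0 with h | h | h
      · rcases eq_or_lt_of_le hx.1 with h1 | h1
        · right; left; exact h1.symm
        · left; left; exact ⟨h1, h⟩
      · right; right; left; exact h
      · rcases eq_or_lt_of_le hx.2 with h1 | h1
        · right; right; right; exact h1
        · left; right; exact ⟨h, h1⟩
    apply IntegrableOn.mono_set ?_ hsub
    apply IntegrableOn.union
    · exact hneg.union hIoo
    · have : volume ({-1, 0, 1} : Set ℝ) = 0 :=
        Set.Countable.measure_zero (Set.Finite.countable (by simp)) _
      unfold IntegrableOn
      rw [Measure.restrict_eq_zero.mpr this]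
      exact integrable_zero_measure
  have heq : (fun t : ℝ => if |t| ≤ 1 then |t| ^ c else 0)
      = Set.indicator (Set.Icc (-1:ℝ) 1) (fun t => |t| ^ c) := by
    funext t
    rw [Set.indicator_apply]
    congr 1
    simp [Set.mem_Icc, abs_le]
  rw [heq, integrable_indicator_iff measurableSet_Icc]
  exact hIcc

noncomputable def expo (d : ℕ) (hd : 0 < d) (h2 : 1 < d) (j : Fin d) : ℝ :=
  if j = ⟨0, hd⟩ then -(3/4) else if j = ⟨1, h2⟩ then -(1/2) else 0

lemma integrable_prodBound (d : ℕ) (hd : 0 < d) (h2 : 1 < d) :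
    Integrable (fun ξ : EuclideanSpace ℝ (Fin d) =>
      ∏ j, (if |ξ j| ≤ 1 then |ξ j| ^ expo d hd h2 j else 0)) volume := by
  have hpre := EuclideanSpace.volume_preserving_symm_measurableEquiv_toLp (Fin d)
  have hpi : Integrable (fun x : Fin d → ℝ =>
      ∏ j, (if |x j| ≤ 1 then |x j| ^ expo d hd h2 j else 0)) volume :=
    Integrable.fintype_prod (𝕜 := ℝ)
      (f := fun j t => if |t| ≤ 1 then |t| ^ expo d hd h2 j else 0)
      (fun j => integrable_g1d _ (by unfold expo; split_ifs <;> norm_num))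
  have := (hpre.integrable_comp_emb
      (MeasurableEquiv.toLp 2 (Fin d → ℝ)).symm.measurableEmbedding).mpr hpi
  exact this

lemma coord_null (d : ℕ) (j : Fin d) :
    volume {ξ : EuclideanSpace ℝ (Fin d) | ξ j = 0} = 0 := by
  have hset : {ξ : EuclideanSpace ℝ (Fin d) | ξ j = 0}
      = (LinearMap.ker ((EuclideanSpace.proj j : EuclideanSpace ℝ (Fin d) →L[ℝ] ℝ)
          : EuclideanSpace ℝ (Fin d) →ₗ[ℝ] ℝ) : Set (EuclideanSpace ℝ (Fin d))) := by
    ext ξ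
    simp only [Set.mem_setOf_eq, SetLike.mem_coe, LinearMap.mem_ker,
      ContinuousLinearMap.coe_coe]
    exact Iff.rfl
  rw [hset]
  apply Measure.addHaar_submodule
  intro h
  have h1 : EuclideanSpace.single j (1:ℝ) ∈ (⊤ : Submodule ℝ (EuclideanSpace ℝ (Fin d))) :=
    Submodule.mem_top
  rw [← h, LinearMap.mem_ker] at h1
  have h2' : EuclideanSpace.single j (1:ℝ) j = 0 := h1
  simp [EuclideanSpace.single_apply] at h2'

lemma abs_coord_le_norm (d : ℕ) (ξ : EuclideanSpace ℝ (Fin d)) (j : Fin d) :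
    |ξ j| ≤ ‖ξ‖ := by
  have h1 : (ξ j) ^ 2 ≤ ‖ξ‖ ^ 2 := by
    rw [norm_sq_eq]
    exact Finset.single_le_sum (f := fun i => (ξ i)^2) (fun i _ => by positivity)
      (Finset.mem_univ j)
  calc |ξ j| = Real.sqrt ((ξ j) ^ 2) := (Real.sqrt_sq_eq_abs _).symm
    _ ≤ Real.sqrt (‖ξ‖ ^ 2) := Real.sqrt_le_sqrt h1
    _ = ‖ξ‖ := by rw [Real.sqrt_sq (norm_nonneg _)]

lemma ball_lintegral_lt_top (d : ℕ) (hd : 0 < d) (s : ℝ) :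
    ∫⁻ ξ in Metric.ball (0 : EuclideanSpace ℝ (Fin d)) 1,
      (ENNReal.ofReal (omegaD d hd s ξ))⁻¹ ∂volume < ⊤ := by
  haveI : Nonempty (Fin d) := ⟨⟨0, hd⟩⟩
  haveI : Nontrivial (EuclideanSpace ℝ (Fin d)) := by
    refine ⟨EuclideanSpace.single ⟨0, hd⟩ (1 : ℝ), 0, ?_⟩
    intro h
    have := congrArg (fun v : EuclideanSpace ℝ (Fin d) => v ⟨0, hd⟩) h
    simp [EuclideanSpace.single_apply] at this
  by_cases h2 : 1 < d
  · -- d ≥ 2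
    set B := Metric.ball (0 : EuclideanSpace ℝ (Fin d)) 1 with hB
    set g : EuclideanSpace ℝ (Fin d) → ℝ :=
      fun ξ => ∏ j, (if |ξ j| ≤ 1 then |ξ j| ^ expo d hd h2 j else 0) with hg
    have hgnn : ∀ ξ, 0 ≤ g ξ := by
      intro ξ
      apply Finset.prod_nonneg
      intro j _
      split_ifs
      · positivity
      · exact le_rfl
    have key : ∀ᵐ ξ ∂(volume.restrict B),
        (ENNReal.ofReal (omegaD d hd s ξ))⁻¹ ≤ ENNReal.ofReal (1 + g ξ) := by
      have hn0 : ∀ᵐ ξ : EuclideanSpace ℝ (Fin d) ∂volume, ξ ⟨0, hd⟩ ≠ 0 := by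
        have := coord_null d ⟨0, hd⟩
        rw [ae_iff]
        simpa using this
      have hn1 : ∀ᵐ ξ : EuclideanSpace ℝ (Fin d) ∂volume, ξ ⟨1, h2⟩ ≠ 0 := by
        have := coord_null d ⟨1, h2⟩
        rw [ae_iff]
        simpa using this
      filter_upwards [ae_restrict_mem Metric.isOpen_ball.measurableSet,
        ae_restrict_of_ae hn0, ae_restrict_of_ae hn1] with ξ hξB hξ0 hξ1
      have hξnorm : ‖ξ‖ < 1 := by simpa [hB] using hξB
      refine le_trans (omega_inv_bound d hd h2 s ξ hξnorm hξ0 hξ1) ?_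
      apply ENNReal.ofReal_le_ofReal
      have hgval : g ξ = (ξ ⟨0, hd⟩ ^ 2) ^ (-(3/8) : ℝ) * (ξ ⟨1, h2⟩ ^ 2) ^ (-(1/4) : ℝ) := by
        have hcoord : ∀ j : Fin d, |ξ j| ≤ 1 :=
          fun j => le_trans (abs_coord_le_norm d ξ j) hξnorm.le
        have hprod : g ξ = ∏ j, |ξ j| ^ expo d hd h2 j := by
          apply Finset.prod_congr rfl
          intro j _
          rw [if_pos (hcoord j)]
        rw [hprod]
        have hne : (⟨0, hd⟩ : Fin d) ≠ ⟨1, h2⟩ := by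
          intro h
          exact absurd (congrArg Fin.val h) (by norm_num)
        rw [← Finset.mul_prod_erase Finset.univ _ (Finset.mem_univ (⟨0, hd⟩ : Fin d))]
        rw [← Finset.mul_prod_erase _ _
          (Finset.mem_erase.mpr ⟨hne.symm, Finset.mem_univ (⟨1, h2⟩ : Fin d)⟩)]
        have hrest : ∏ j ∈ (Finset.univ.erase (⟨0, hd⟩ : Fin d)).erase (⟨1, h2⟩ : Fin d),
            |ξ j| ^ expo d hd h2 j = 1 := by
          apply Finset.prod_eq_one
          intro j hj
          have hj1 := (Finset.mem_erase.mp hj).1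
          have hj0 := (Finset.mem_erase.mp (Finset.mem_erase.mp hj).2).1
          unfold expo
          rw [if_neg hj0, if_neg hj1, Real.rpow_zero]
        rw [hrest, mul_one]
        have e0 : expo d hd h2 ⟨0, hd⟩ = -(3/4) := by unfold expo; rw [if_pos rfl]
        have e1 : expo d hd h2 ⟨1, h2⟩ = -(1/2) := by
          unfold expo
          have hne' : (⟨1, h2⟩ : Fin d) ≠ ⟨0, hd⟩ := by
            intro h; exact absurd (congrArg Fin.val h) (by norm_num)
          rw [if_neg hne', if_pos rfl]
        rw [e0, e1]
        congr 1
        · rw [← sq_abs, ← Real.rpow_natCast |ξ ⟨0, hd⟩| 2, ← Real.rpow_mul (abs_nonneg _)]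
          norm_num
        · rw [← sq_abs, ← Real.rpow_natCast |ξ ⟨1, h2⟩| 2, ← Real.rpow_mul (abs_nonneg _)]
          norm_num
      rw [hgval]
    calc ∫⁻ ξ in B, (ENNReal.ofReal (omegaD d hd s ξ))⁻¹ ∂volume
        ≤ ∫⁻ ξ in B, ENNReal.ofReal (1 + g ξ) ∂volume := lintegral_mono_ae key
      _ < ⊤ := by
          have hint : Integrable (fun ξ => 1 + g ξ) (volume.restrict B) := by
            apply Integrable.add
            · exact integrableOn_const (C := (1:ℝ)) (by rw [hB]; exact measure_ball_lt_top.ne)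
            · exact (integrable_prodBound d hd h2).restrict
          exact hint.lintegral_lt_top
  · -- d = 1
    have key : ∀ᵐ ξ ∂(volume.restrict (Metric.ball (0 : EuclideanSpace ℝ (Fin d)) 1)),
        (ENNReal.ofReal (omegaD d hd s ξ))⁻¹ ≤ 1 := by
      have hz : ∀ᵐ ξ : EuclideanSpace ℝ (Fin d) ∂volume, ξ ≠ 0 := by
        rw [ae_iff]
        simpa using measure_singleton (0 : EuclideanSpace ℝ (Fin d))
      filter_upwards [ae_restrict_mem Metric.isOpen_ball.measurableSet,
        ae_restrict_of_ae hz] with ξ hξB hξ0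
      have hξnorm : ‖ξ‖ < 1 := by simpa using hξB
      rw [ENNReal.inv_le_one]
      calc (1:ℝ≥0∞) = ENNReal.ofReal 1 := by simp
        _ ≤ ENNReal.ofReal (omegaD d hd s ξ) :=
            ENNReal.ofReal_le_ofReal (omega_ge_one_d1 d hd h2 s ξ hξnorm hξ0)
    calc ∫⁻ ξ in Metric.ball (0 : EuclideanSpace ℝ (Fin d)) 1,
          (ENNReal.ofReal (omegaD d hd s ξ))⁻¹ ∂volume
        ≤ ∫⁻ _ in Metric.ball (0 : EuclideanSpace ℝ (Fin d)) 1, 1 ∂volume :=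
          lintegral_mono_ae key
      _ = volume (Metric.ball (0 : EuclideanSpace ℝ (Fin d)) 1) := by
          rw [lintegral_one, Measure.restrict_apply_univ]
      _ < ⊤ := measure_ball_lt_top

lemma omega_ge_one_out (d : ℕ) (hd : 0 < d) (s : ℝ) (hs : 0 ≤ s)
    (ξ : EuclideanSpace ℝ (Fin d)) (hξ : ¬ ‖ξ‖ < 1) : 1 ≤ omegaD d hd s ξ := by
  unfold omegaD
  rw [if_neg hξ]
  push_neg at hξ
  apply Real.one_le_rpow (by nlinarith) hs

lemma setLintegral_inv_omega_lt_top (d : ℕ) (hd : 0 < d) (s : ℝ) (hs : 0 ≤ s)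
    (K : Set (EuclideanSpace ℝ (Fin d))) (hK : IsCompact K) :
    ∫⁻ ξ in K, (ENNReal.ofReal (omegaD d hd s ξ))⁻¹ ∂volume < ⊤ := by
  set B := Metric.ball (0 : EuclideanSpace ℝ (Fin d)) 1 with hB
  have hsub : K ⊆ B ∪ (K \ B) := by
    intro x hx
    by_cases h : x ∈ B
    · exact Or.inl h
    · exact Or.inr ⟨hx, h⟩
  calc ∫⁻ ξ in K, (ENNReal.ofReal (omegaD d hd s ξ))⁻¹ ∂volume
      ≤ ∫⁻ ξ in B ∪ (K \ B), (ENNReal.ofReal (omegaD d hd s ξ))⁻¹ ∂volume :=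
        lintegral_mono_set hsub
    _ ≤ (∫⁻ ξ in B, (ENNReal.ofReal (omegaD d hd s ξ))⁻¹ ∂volume)
        + ∫⁻ ξ in K \ B, (ENNReal.ofReal (omegaD d hd s ξ))⁻¹ ∂volume := lintegral_union_le _ _ _
    _ < ⊤ := by
        apply ENNReal.add_lt_top.mpr
        constructor
        · exact ball_lintegral_lt_top d hd s
        · have hbound : ∀ᵐ ξ ∂(volume.restrict (K \ B)),
              (ENNReal.ofReal (omegaD d hd s ξ))⁻¹ ≤ 1 := by
            have hmeas : MeasurableSet (K \ B) :=
              hK.measurableSet.diff Metric.isOpen_ball.measurableSet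
            filter_upwards [ae_restrict_mem hmeas] with ξ hξ
            rw [ENNReal.inv_le_one]
            calc (1:ℝ≥0∞) = ENNReal.ofReal 1 := by simp
              _ ≤ ENNReal.ofReal (omegaD d hd s ξ) := ENNReal.ofReal_le_ofReal
                  (omega_ge_one_out d hd s hs ξ (by simpa [hB] using hξ.2))
          calc ∫⁻ ξ in K \ B, (ENNReal.ofReal (omegaD d hd s ξ))⁻¹ ∂volume
              ≤ ∫⁻ _ in K \ B, 1 ∂volume := lintegral_mono_ae hbound
            _ = volume (K \ B) := by rw [lintegral_one, Measure.restrict_apply_univ]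
            _ ≤ volume K := measure_mono Set.diff_subset
            _ < ⊤ := hK.measure_lt_top

lemma locInt (d : ℕ) (hd : 0 < d) (s : ℝ) (hs : 0 ≤ s) (G : EuclideanSpace ℝ (Fin d) → ℂ)
    (hG : AEMeasurable G volume) (hfin : XnormSq d hd s G < ⊤) :
    LocallyIntegrable G volume := by
  rw [locallyIntegrable_iff]
  intro K hK
  constructor
  · exact (hG.restrict).aestronglyMeasurable
  · show (∫⁻ ξ, (‖G ξ‖₊ : ℝ≥0∞) ∂(volume.restrict K)) < ⊤
    set w : EuclideanSpace ℝ (Fin d) → ℝ≥0∞ :=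
      fun ξ => ENNReal.ofReal (omegaD d hd s ξ) with hw
    have hwmeas : Measurable w := measurable_omegaD d hd s
    set f : EuclideanSpace ℝ (Fin d) → ℝ≥0∞ := fun ξ => (w ξ)⁻¹ ^ (1/2 : ℝ) with hf
    set g : EuclideanSpace ℝ (Fin d) → ℝ≥0∞ :=
      fun ξ => (w ξ * (‖G ξ‖₊ : ℝ≥0∞) ^ 2) ^ (1/2 : ℝ) with hg
    have hfmeas : AEMeasurable f (volume.restrict K) :=
      ((ENNReal.continuous_rpow_const.measurable).comp hwmeas.inv).aemeasurable
    have hGn : AEMeasurable (fun ξ => (‖G ξ‖₊ : ℝ≥0∞)) (volume.restrict K) :=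
      hG.restrict.nnnorm.coe_nnreal_ennreal
    have hgmeas : AEMeasurable g (volume.restrict K) := by
      apply (ENNReal.continuous_rpow_const.measurable).comp_aemeasurable
      exact (hwmeas.aemeasurable.restrict).mul (hGn.pow_const 2)
    have hae : ∀ᵐ ξ ∂(volume.restrict K), (‖G ξ‖₊ : ℝ≥0∞) ≤ f ξ * g ξ := by
      have hz : ∀ᵐ ξ : EuclideanSpace ℝ (Fin d) ∂volume, ξ ≠ 0 := by
        haveI : Nonempty (Fin d) := ⟨⟨0, hd⟩⟩
        haveI : Nontrivial (EuclideanSpace ℝ (Fin d)) := by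
          refine ⟨EuclideanSpace.single ⟨0, hd⟩ (1 : ℝ), 0, ?_⟩
          intro h
          have := congrArg (fun v : EuclideanSpace ℝ (Fin d) => v ⟨0, hd⟩) h
          simp [EuclideanSpace.single_apply] at this
        rw [ae_iff]
        simpa using measure_singleton (0 : EuclideanSpace ℝ (Fin d))
      filter_upwards [ae_restrict_of_ae hz] with ξ hξ
      have hw0 : w ξ ≠ 0 := by
        simp only [hw, ne_eq, ENNReal.ofReal_eq_zero, not_le]
        exact omegaD_pos d hd s ξ hξ
      have hwtop : w ξ ≠ ⊤ := ENNReal.ofReal_ne_top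
      rw [hf, hg, ← ENNReal.mul_rpow_of_nonneg _ _ (by norm_num : (0:ℝ) ≤ 1/2)]
      rw [← mul_assoc, ENNReal.inv_mul_cancel hw0 hwtop, one_mul]
      rw [← ENNReal.rpow_natCast (‖G ξ‖₊ : ℝ≥0∞) 2, ← ENNReal.rpow_mul]
      norm_num
    have hconj : Real.HolderConjugate 2 2 := Real.HolderConjugate.two_two
    have hholder := ENNReal.lintegral_mul_le_Lp_mul_Lq (volume.restrict K) hconj hfmeas hgmeas
    have hf2 : ∫⁻ ξ, f ξ ^ (2:ℝ) ∂(volume.restrict K)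
        = ∫⁻ ξ in K, (w ξ)⁻¹ ∂volume := by
      apply lintegral_congr
      intro ξ
      rw [hf, ← ENNReal.rpow_mul]
      norm_num
    have hg2 : ∫⁻ ξ, g ξ ^ (2:ℝ) ∂(volume.restrict K)
        = ∫⁻ ξ in K, w ξ * (‖G ξ‖₊ : ℝ≥0∞) ^ 2 ∂volume := by
      apply lintegral_congr
      intro ξ
      rw [hg, ← ENNReal.rpow_mul]
      norm_num
    have hinv : ∫⁻ ξ in K, (w ξ)⁻¹ ∂volume < ⊤ :=
      setLintegral_inv_omega_lt_top d hd s hs K hK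
    have hXK : ∫⁻ ξ in K, w ξ * (‖G ξ‖₊ : ℝ≥0∞) ^ 2 ∂volume ≤ XnormSq d hd s G :=
      setLIntegral_le_lintegral _ _
    calc ∫⁻ ξ, (‖G ξ‖₊ : ℝ≥0∞) ∂(volume.restrict K)
        ≤ ∫⁻ ξ, (f * g) ξ ∂(volume.restrict K) := lintegral_mono_ae hae
      _ ≤ (∫⁻ ξ, f ξ ^ (2:ℝ) ∂(volume.restrict K)) ^ (1/(2:ℝ))
          * (∫⁻ ξ, g ξ ^ (2:ℝ) ∂(volume.restrict K)) ^ (1/(2:ℝ)) := hholder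
      _ < ⊤ := by
          apply ENNReal.mul_lt_top
          · rw [hf2]
            exact ENNReal.rpow_lt_top_of_nonneg (by norm_num) hinv.ne
          · rw [hg2]
            exact ENNReal.rpow_lt_top_of_nonneg (by norm_num)
              (lt_of_le_of_lt hXK hfin).ne

noncomputable def muX (d : ℕ) (hd : 0 < d) (s : ℝ) : Measure (EuclideanSpace ℝ (Fin d)) :=
  volume.withDensity fun ξ => ENNReal.ofReal (omegaD d hd s ξ)

lemma Xnorm_eq_mu (d : ℕ) (hd : 0 < d) (s : ℝ) (G : EuclideanSpace ℝ (Fin d) → ℂ) :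
    XnormSq d hd s G = ∫⁻ ξ, (‖G ξ‖₊ : ℝ≥0∞) ^ 2 ∂(muX d hd s) := by
  rw [muX, lintegral_withDensity_eq_lintegral_mul_non_measurable _ (measurable_omegaD d hd s)
    (Filter.Eventually.of_forall fun x => ENNReal.ofReal_lt_top)]
  rfl

lemma eLpNorm_sq {α : Type*} [MeasurableSpace α] (ν : Measure α) (f : α → ℂ) :
    eLpNorm f 2 ν ^ 2 = ∫⁻ x, (‖f x‖₊ : ℝ≥0∞) ^ 2 ∂ν := by
  rw [eLpNorm_eq_lintegral_rpow_enorm_toReal (by norm_num) (by norm_num)]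
  rw [← ENNReal.rpow_natCast _ 2, ← ENNReal.rpow_mul]
  norm_num [enorm_eq_nnnorm]

lemma Xnorm_eq_eLp (d : ℕ) (hd : 0 < d) (s : ℝ) (G : EuclideanSpace ℝ (Fin d) → ℂ) :
    XnormSq d hd s G = eLpNorm G 2 (muX d hd s) ^ 2 := by
  rw [Xnorm_eq_mu, eLpNorm_sq]

lemma vol_ac_muX (d : ℕ) (hd : 0 < d) (s : ℝ) :
    (volume : Measure (EuclideanSpace ℝ (Fin d))) ≪ muX d hd s := by
  refine Measure.AbsolutelyContinuous.mk fun A hA hA0 => ?_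
  haveI : Nonempty (Fin d) := ⟨⟨0, hd⟩⟩
  haveI : Nontrivial (EuclideanSpace ℝ (Fin d)) := by
    refine ⟨EuclideanSpace.single ⟨0, hd⟩ (1 : ℝ), 0, ?_⟩
    intro h
    have := congrArg (fun v : EuclideanSpace ℝ (Fin d) => v ⟨0, hd⟩) h
    simp [EuclideanSpace.single_apply] at this
  rw [muX, withDensity_apply _ hA] at hA0
  have h0 : ∀ᵐ ξ ∂(volume.restrict A), ENNReal.ofReal (omegaD d hd s ξ) = 0 :=
    (lintegral_eq_zero_iff' ((measurable_omegaD d hd s).aemeasurable.restrict)).mp hA0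
  have h1 : ∀ᵐ ξ : EuclideanSpace ℝ (Fin d) ∂volume, ENNReal.ofReal (omegaD d hd s ξ) ≠ 0 := by
    have hz : (volume ({0} : Set (EuclideanSpace ℝ (Fin d)))) = 0 := measure_singleton 0
    filter_upwards [compl_mem_ae_iff.mpr hz] with ξ hξ
    simp only [Set.mem_compl_iff, Set.mem_singleton_iff] at hξ
    simp [ENNReal.ofReal_eq_zero, not_le, omegaD_pos d hd s ξ hξ]
  have h2 : ∀ᵐ ξ ∂(volume.restrict A), ENNReal.ofReal (omegaD d hd s ξ) ≠ 0 :=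
    ae_restrict_of_ae h1
  have : ∀ᵐ ξ ∂(volume.restrict A), False := by filter_upwards [h0, h2] with ξ h h'; exact h' h
  have h3 := ae_iff.mp this
  simp only [not_false_iff, Set.setOf_true] at h3
  rwa [Measure.restrict_apply_univ] at h3

lemma tendsto_of_sq {u : ℕ → ℝ≥0∞} (h : Filter.Tendsto (fun m => u m ^ 2) Filter.atTop (nhds 0)) :
    Filter.Tendsto u Filter.atTop (nhds 0) := by
  have hc : Filter.Tendsto (fun x : ℝ≥0∞ => x ^ (1/2 : ℝ)) (nhds 0) (nhds 0) := by
    have := (ENNReal.continuous_rpow_const (y := 1/2)).tendsto 0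
    simpa [ENNReal.zero_rpow_of_pos] using this
  have h2 := hc.comp h
  have hu : u = fun m => (u m ^ 2) ^ (1/2 : ℝ) := by
    funext m
    rw [← ENNReal.rpow_natCast (u m) 2, ← ENNReal.rpow_mul]
    norm_num
  rw [hu]
  exact h2

/-- reflection-conjugation invariance of XnormSq -/
lemma Xnorm_reflect (d : ℕ) (hd : 0 < d) (s : ℝ) (H : EuclideanSpace ℝ (Fin d) → ℂ) :
    XnormSq d hd s (fun ξ => conj (H (-ξ))) = XnormSq d hd s H := by
  unfold XnormSq
  have h1 : ∀ ξ : EuclideanSpace ℝ (Fin d),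
      ENNReal.ofReal (omegaD d hd s ξ) * (‖conj (H (-ξ))‖₊ : ℝ≥0∞) ^ 2
      = ENNReal.ofReal (omegaD d hd s (-ξ)) * (‖H (-ξ)‖₊ : ℝ≥0∞) ^ 2 := by
    intro ξ
    rw [omegaD_neg, RCLike.nnnorm_conj]
  simp_rw [h1]
  have e : EuclideanSpace ℝ (Fin d) ≃ᵐ EuclideanSpace ℝ (Fin d) :=
    (Homeomorph.neg (EuclideanSpace ℝ (Fin d))).toMeasurableEquiv
  calc ∫⁻ ξ, ENNReal.ofReal (omegaD d hd s (-ξ)) * (‖H (-ξ)‖₊ : ℝ≥0∞) ^ 2 ∂volume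
      = ∫⁻ ξ, ENNReal.ofReal (omegaD d hd s ξ) * (‖H ξ‖₊ : ℝ≥0∞) ^ 2
          ∂(Measure.map Neg.neg volume) := by
        rw [show (Neg.neg : EuclideanSpace ℝ (Fin d) → EuclideanSpace ℝ (Fin d))
            = ⇑((Homeomorph.neg (EuclideanSpace ℝ (Fin d))).toMeasurableEquiv) from rfl]
        rw [lintegral_map_equiv]
    _ = ∫⁻ ξ, ENNReal.ofReal (omegaD d hd s ξ) * (‖H ξ‖₊ : ℝ≥0∞) ^ 2 ∂volume := by
        rw [Measure.map_neg_eq_self]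

set_option maxHeartbeats 1000000 in
/-- completeness of `X^s(ℝ^d)`; Fourier-side formulation: an element of
`X^s` is represented by its Fourier transform `F`, a locally integrable a.e.
conjugate-symmetric function with finite `X^s` norm.  Every Cauchy sequence in `X^s(ℝ^d)`
converges in `X^s(ℝ^d)`; together with the (elementary) inner-product structure this makes
`X^s(ℝ^d)` a Hilbert space. -/
theorem stmt_11 (d : ℕ) (hd : 0 < d) (s : ℝ) (hs : 0 ≤ s)
    (F : ℕ → EuclideanSpace ℝ (Fin d) → ℂ)
    (hmeas : ∀ m, AEMeasurable (F m))
    (hsymm : ∀ m, ∀ᵐ ξ ∂volume, conj (F m ξ) = F m (-ξ))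
    (hloc : ∀ m, LocallyIntegrable (F m) volume)
    (hfin : ∀ m, XnormSq d hd s (F m) < ⊤)
    (hcau : ∀ ε : ℝ≥0∞, 0 < ε → ∃ N : ℕ, ∀ p, N ≤ p → ∀ q, N ≤ q →
      XnormSq d hd s (fun ξ => F p ξ - F q ξ) < ε) :
    ∃ G : EuclideanSpace ℝ (Fin d) → ℂ,
      AEMeasurable G ∧
      (∀ᵐ ξ ∂volume, conj (G ξ) = G (-ξ)) ∧
      LocallyIntegrable G volume ∧
      XnormSq d hd s G < ⊤ ∧
      Filter.Tendsto (fun m => XnormSq d hd s (fun ξ => F m ξ - G ξ))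
        Filter.atTop (nhds 0) := by
  classical
  set μ := muX d hd s with hμ
  haveI : Fact ((1:ℝ≥0∞) ≤ 2) := ⟨one_le_two⟩
  have hXel : ∀ Gg : EuclideanSpace ℝ (Fin d) → ℂ,
      XnormSq d hd s Gg = eLpNorm Gg 2 μ ^ 2 := fun Gg => Xnorm_eq_eLp d hd s Gg
  have hac : μ ≪ (volume : Measure (EuclideanSpace ℝ (Fin d))) :=
    withDensity_absolutelyContinuous _ _
  have hmem : ∀ m, MemLp (F m) 2 μ := by
    intro m
    refine ⟨((hmeas m).mono_ac hac).aestronglyMeasurable, ?_⟩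
    have := hfin m
    rw [hXel] at this
    rw [lt_top_iff_ne_top] at this ⊢
    intro h
    exact this (by rw [h]; simp)
  set fL : ℕ → Lp ℂ 2 μ := fun m => (hmem m).toLp (F m) with hfL
  have hdist : ∀ p q, dist (fL p) (fL q) = (eLpNorm (fun ξ => F p ξ - F q ξ) 2 μ).toReal := by
    intro p q
    rw [Lp.dist_def]
    congr 1
    apply eLpNorm_congr_ae
    filter_upwards [(hmem p).coeFn_toLp, (hmem q).coeFn_toLp] with ξ h1 h2
    simp [hfL, h1, h2]
  have hcauchy : CauchySeq fL := by
    rw [Metric.cauchySeq_iff']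
    intro ε hε
    obtain ⟨N, hN⟩ := hcau ((ENNReal.ofReal ε) ^ 2) (by positivity)
    refine ⟨N, fun n hn => ?_⟩
    have h1 := hN n hn N le_rfl
    rw [hXel] at h1
    have h2 : eLpNorm (fun ξ => F n ξ - F N ξ) 2 μ < ENNReal.ofReal ε := by
      by_contra hcon
      push_neg at hcon
      exact absurd (pow_le_pow_left' hcon 2) (not_le.mpr h1)
    rw [hdist]
    calc (eLpNorm (fun ξ => F n ξ - F N ξ) 2 μ).toReal
        < (ENNReal.ofReal ε).toReal := by
          apply ENNReal.toReal_strict_mono (by simp) h2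
      _ = ε := ENNReal.toReal_ofReal hε.le
  obtain ⟨L, hL⟩ := cauchySeq_tendsto_of_complete hcauchy
  set G : EuclideanSpace ℝ (Fin d) → ℂ := ⇑L with hGdef
  have hGm : AEMeasurable G volume :=
    (Lp.aestronglyMeasurable L).aemeasurable.mono_ac (vol_ac_muX d hd s)
  have hconv : Filter.Tendsto (fun m => eLpNorm (fun ξ => F m ξ - G ξ) 2 μ)
      Filter.atTop (nhds 0) := by
    have := (Lp.tendsto_Lp_iff_tendsto_eLpNorm' fL L).mp hL
    apply this.congr
    intro m
    apply eLpNorm_congr_ae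
    filter_upwards [(hmem m).coeFn_toLp] with ξ h1
    simp [hfL, h1, hGdef]
  have hXconv : Filter.Tendsto (fun m => XnormSq d hd s (fun ξ => F m ξ - G ξ))
      Filter.atTop (nhds 0) := by
    have := ENNReal.Tendsto.pow (n := 2) hconv
    simp only [ne_eq, OfNat.ofNat_ne_zero, not_false_eq_true, zero_pow] at this
    apply this.congr
    intro m
    rw [hXel]
  have hGfin : XnormSq d hd s G < ⊤ := by
    rw [hXel]
    exact ENNReal.pow_lt_top (Lp.eLpNorm_lt_top L)
  -- conjugate symmetry
  have hsym : ∀ᵐ ξ ∂volume, conj (G ξ) = G (-ξ) := by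
    set H : EuclideanSpace ℝ (Fin d) → ℂ := fun ξ => conj (G (-ξ)) with hHdef
    have hHm : AEMeasurable H volume := by
      have h1 : AEMeasurable (fun ξ => G (-ξ)) volume :=
        hGm.comp_quasiMeasurePreserving
          (Measure.measurePreserving_neg _).quasiMeasurePreserving
      exact (RCLike.continuous_conj (K := ℂ)).measurable.comp_aemeasurable h1
    have hXH : ∀ m, XnormSq d hd s (fun ξ => F m ξ - H ξ)
        = XnormSq d hd s (fun ξ => F m ξ - G ξ) := by
      intro m
      have heq : ∀ᵐ ξ ∂volume, F m ξ - H ξ = conj ((fun η => F m η - G η) (-ξ)) := by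
        filter_upwards [hsymm m] with ξ h1
        simp only [hHdef, map_sub]
        rw [← h1, RCLike.conj_conj]
      calc XnormSq d hd s (fun ξ => F m ξ - H ξ)
          = XnormSq d hd s (fun ξ => conj ((fun η => F m η - G η) (-ξ))) := by
            unfold XnormSq
            apply lintegral_congr_ae
            filter_upwards [heq] with ξ h1
            rw [h1]
        _ = XnormSq d hd s (fun η => F m η - G η) := Xnorm_reflect d hd s (fun η => F m η - G η)
    have hconvH : Filter.Tendsto (fun m => eLpNorm (fun ξ => F m ξ - H ξ) 2 μ)
        Filter.atTop (nhds 0) := by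
      apply tendsto_of_sq
      have : (fun m => eLpNorm (fun ξ => F m ξ - H ξ) 2 μ ^ 2)
          = fun m => XnormSq d hd s (fun ξ => F m ξ - G ξ) := by
        funext m
        rw [← hXel, hXH]
      rw [this]
      exact hXconv
    have hGH : eLpNorm (fun ξ => G ξ - H ξ) 2 μ = 0 := by
      have hGa : AEStronglyMeasurable G μ := Lp.aestronglyMeasurable L
      have hHa : AEStronglyMeasurable H μ := (hHm.mono_ac hac).aestronglyMeasurable
      have hFa : ∀ m, AEStronglyMeasurable (F m) μ := fun m => (hmem m).1
      have hle : ∀ m, eLpNorm (fun ξ => G ξ - H ξ) 2 μ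
          ≤ eLpNorm (fun ξ => G ξ - F m ξ) 2 μ + eLpNorm (fun ξ => F m ξ - H ξ) 2 μ := by
        intro m
        have : (fun ξ => G ξ - H ξ)
            = (fun ξ => G ξ - F m ξ) + fun ξ => F m ξ - H ξ := by
          funext ξ; simp
        rw [this]
        exact eLpNorm_add_le (hGa.sub (hFa m)) ((hFa m).sub hHa) one_le_two
    -- the sum tends to 0
      have hsum : Filter.Tendsto
          (fun m => eLpNorm (fun ξ => G ξ - F m ξ) 2 μ + eLpNorm (fun ξ => F m ξ - H ξ) 2 μ)
          Filter.atTop (nhds 0) := by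
        have h1 : Filter.Tendsto (fun m => eLpNorm (fun ξ => G ξ - F m ξ) 2 μ)
            Filter.atTop (nhds 0) := by
          apply hconv.congr
          intro m
          rw [← eLpNorm_neg]
          congr 1
          funext ξ; simp
        simpa using h1.add hconvH
      have := ge_of_tendsto hsum (Filter.Eventually.of_forall hle)
      exact le_antisymm (by simpa using this) zero_le
    have h0 : (fun ξ => G ξ - H ξ) =ᵐ[μ] 0 :=
      (eLpNorm_eq_zero_iff (f := fun ξ => G ξ - H ξ)
        ((Lp.aestronglyMeasurable L).sub ((hHm.mono_ac hac).aestronglyMeasurable))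
        (by norm_num)).mp hGH
    have h0v : (fun ξ => G ξ - H ξ) =ᵐ[volume] 0 := (vol_ac_muX d hd s).ae_le h0
    filter_upwards [h0v] with ξ h1
    have : G ξ = H ξ := by
      have := sub_eq_zero.mp h1
      exact this
    rw [this, hHdef]
    simp only [RCLike.conj_conj]
  exact ⟨G, hGm, hsym, locInt d hd s hs G hGm hGfin, hGfin, hXconv⟩
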